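/- Uniqueness of closed extension in breadth one: if two closed bases {L̃₀,…,L̃_k} and {Γ₀,…,Γ_k} of the same Max Noether space satisfy Γ₀ = L̃₀ = D(0) and Γ₁ = (1/a)L̃₁ for some a ≠ 0, each L̃ᵢ and Γᵢ contains the pure derivative D(i,0,…,0) (with coefficient 1 resp. 1/aⁱ) and no lower pure derivatives D(j,0,…,0) for 0 < j < i, and Φ₁ acts by Φ₁(Γᵢ reduced) = (1/aⁱ) L̃_{i−1}, then each Γᵢ is a linear combination of L̃₀,…,L̃ᵢ, with the reduced form Γ̄ᵢ = (1/aⁱ) L̃ᵢ. -/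

import Mathlib

open MvPolynomial

/-- The anti-differentiation map `Φⱼ` on coefficient vectors of differential operators:
`(Φⱼ c)(β) = c(β + eⱼ)`. -/
noncomputable def shiftOp {σ : Type*} [DecidableEq σ] (j : σ)
    (c : (σ →₀ ℕ) →₀ ℂ) : (σ →₀ ℕ) →₀ ℂ :=
  Finsupp.comapDomain (fun β => β + Finsupp.single j 1) c
    ((add_left_injective _).injOn)

lemma shiftOp_apply {σ : Type*} [DecidableEq σ] (j : σ) (c : (σ →₀ ℕ) →₀ ℂ) (β : σ →₀ ℕ) :
    shiftOp j c β = c (β + Finsupp.single j 1) :=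
  Finsupp.comapDomain_apply _ _ _ _

lemma shiftOp_add {σ : Type*} [DecidableEq σ] (j : σ) (x y : (σ →₀ ℕ) →₀ ℂ) :
    shiftOp j (x + y) = shiftOp j x + shiftOp j y := by
  ext β; simp [shiftOp_apply]

lemma shiftOp_smul {σ : Type*} [DecidableEq σ] (j : σ) (r : ℂ) (x : (σ →₀ ℕ) →₀ ℂ) :
    shiftOp j (r • x) = r • shiftOp j x := by
  ext β; simp [shiftOp_apply]

noncomputable def shiftLM {σ : Type*} [DecidableEq σ] (j : σ) :
    ((σ →₀ ℕ) →₀ ℂ) →ₗ[ℂ] ((σ →₀ ℕ) →₀ ℂ) where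
  toFun := shiftOp j
  map_add' := shiftOp_add j
  map_smul' := shiftOp_smul j

lemma shiftOp_sum {σ : Type*} [DecidableEq σ] {ι : Type*} (j : σ) (s : Finset ι)
    (f : ι → ((σ →₀ ℕ) →₀ ℂ)) :
    shiftOp j (∑ i ∈ s, f i) = ∑ i ∈ s, shiftOp j (f i) :=
  map_sum (shiftLM j) f s

/-- Uniqueness of the closed extension in breadth one: if two closed bases `{L̃₀,…,L̃_K}` and
`{Γ₀,…,Γ_K}` of the same Max Noether space satisfy `Γ₀ = L̃₀ = D(0)`, `Γ₁ = (1/a)L̃₁` for some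
`a ≠ 0`, each `L̃ᵢ` (resp. `Γᵢ`) contains the pure derivative `D(i,0,…,0)` with coefficient `1`
(resp. `1/aⁱ`) and no lower pure derivatives `D(j,0,…,0)` for `0 < j < i`, `Φ₁` lowers the
`L̃` family by one, and the `Γ` family is closed under `Φ₁`, then each `Γᵢ` is a linear
combination of `L̃₀,…,L̃ᵢ`, with reduced form `Γ̄ᵢ = (1/aⁱ) L̃ᵢ`. -/
theorem breadth_one_closed_basis_uniqueness {n : ℕ} (K : ℕ) (hK : 1 ≤ K)
    (L Γ : ℕ → ((Fin (n + 1) →₀ ℕ) →₀ ℂ)) (a : ℂ) (ha : a ≠ 0)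
    (hLindep : LinearIndependent ℂ (fun i : Fin (K + 1) => L i))
    (hΓindep : LinearIndependent ℂ (fun i : Fin (K + 1) => Γ i))
    (hspan : Submodule.span ℂ (Set.range fun i : Fin (K + 1) => L i) =
      Submodule.span ℂ (Set.range fun i : Fin (K + 1) => Γ i))
    (hL0 : L 0 = Finsupp.single 0 1) (hΓ0 : Γ 0 = L 0)
    (hΓ1 : Γ 1 = a⁻¹ • L 1)
    (hLpure : ∀ i ≤ K, L i (Finsupp.single (0 : Fin (n + 1)) i) = 1)
    (hΓpure : ∀ i ≤ K, Γ i (Finsupp.single (0 : Fin (n + 1)) i) = a⁻¹ ^ i)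
    (hLlow : ∀ i ≤ K, ∀ j, 0 < j → j < i → L i (Finsupp.single (0 : Fin (n + 1)) j) = 0)
    (hΓlow : ∀ i ≤ K, ∀ j, 0 < j → j < i → Γ i (Finsupp.single (0 : Fin (n + 1)) j) = 0)
    (hΦL : ∀ i < K, shiftOp (0 : Fin (n + 1)) (L (i + 1)) = L i)
    (hΦΓ : ∀ i < K, shiftOp (0 : Fin (n + 1)) (Γ (i + 1)) ∈
      Submodule.span ℂ (Set.range fun j : Fin (i + 1) => Γ j)) :
    ∀ i ≤ K, ∃ d : ℕ → ℂ,
      Γ i = a⁻¹ ^ i • L i + ∑ j ∈ Finset.range i, d j • L j := by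
  -- key vanishing lemma: L j vanishes at pure derivatives above j
  have key : ∀ j, j ≤ K → ∀ i, j < i → L j (Finsupp.single (0 : Fin (n + 1)) i) = 0 := by
    intro j
    induction j with
    | zero =>
      intro _ i hi
      rw [hL0, Finsupp.single_apply, if_neg]
      intro h
      have := congrArg (fun f : Fin (n + 1) →₀ ℕ => f 0) h
      simp at this
      omega
    | succ j ihj =>
      intro hj i hi
      obtain ⟨m, rfl⟩ : ∃ m, i = m + 1 := ⟨i - 1, by omega⟩
      have hrel : L j (Finsupp.single (0 : Fin (n + 1)) m) =
          L (j + 1) (Finsupp.single (0 : Fin (n + 1)) m + Finsupp.single 0 1) := by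
        rw [← hΦL j (by omega), shiftOp_apply]
      rw [show Finsupp.single (0 : Fin (n + 1)) (m + 1) =
          Finsupp.single (0 : Fin (n + 1)) m + Finsupp.single 0 1 from Finsupp.single_add 0 m 1]
      rw [← hrel]
      exact ihj (by omega) m (by omega)
  -- existence of upper-triangular expansion
  have H : ∀ i, i ≤ K → ∃ c : ℕ → ℂ, Γ i = ∑ j ∈ Finset.range (i + 1), c j • L j := by
    intro i
    induction i using Nat.strong_induction_on with
    | _ i ih =>
      intro hi
      rcases i with _ | i
      · exact ⟨fun _ => 1, by simp [hΓ0]⟩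
      -- step: i+1
      have hiK : i < K := by omega
      -- Γ (i+1) in span of L's
      have hmem : Γ (i + 1) ∈ Submodule.span ℂ (Set.range fun j : Fin (K + 1) => L j) := by
        rw [hspan]
        exact Submodule.subset_span ⟨⟨i + 1, by omega⟩, rfl⟩
      obtain ⟨cf, hcf⟩ := (Submodule.mem_span_range_iff_exists_fun ℂ).mp hmem
      set c : ℕ → ℂ := fun j => if h : j < K + 1 then cf ⟨j, h⟩ else 0 with hc
      have hΓexp : Γ (i + 1) = ∑ j ∈ Finset.range (K + 1), c j • L j := by
        rw [← hcf, ← Fin.sum_univ_eq_sum_range (fun j => c j • L j) (K + 1)]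
        refine Finset.sum_congr rfl fun j _ => ?_
        simp [hc, j.isLt, Nat.not_lt.mpr (Nat.lt_succ_iff.mp j.isLt)]
      -- shift of Γ (i+1), expression 1
      have hs0 : shiftOp (0 : Fin (n + 1)) (L 0) = 0 := by
        ext β
        rw [shiftOp_apply, hL0, Finsupp.single_apply, if_neg]
        · rfl
        intro h
        have := congrArg (fun f : Fin (n + 1) →₀ ℕ => f 0) h
        simp at this
      have hE1 : shiftOp (0 : Fin (n + 1)) (Γ (i + 1)) =
          ∑ j ∈ Finset.range K, c (j + 1) • L j := by
        rw [hΓexp, shiftOp_sum]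
        rw [Finset.sum_range_succ' (fun j => shiftOp (0 : Fin (n + 1)) (c j • L j)) K]
        rw [shiftOp_smul, hs0, smul_zero, add_zero]
        refine Finset.sum_congr rfl fun j hj => ?_
        rw [shiftOp_smul, hΦL j (Finset.mem_range.mp hj)]
      -- shift of Γ (i+1) lies in span of L 0 .. L i
      have hspanΓL : Submodule.span ℂ (Set.range fun j : Fin (i + 1) => Γ (j : ℕ)) ≤
          Submodule.span ℂ (Set.range fun j : Fin (i + 1) => L (j : ℕ)) := by
        rw [Submodule.span_le]
        rintro _ ⟨j, rfl⟩
        obtain ⟨b, hb⟩ := ih j j.isLt (by have := j.isLt; omega)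
        show Γ (j : ℕ) ∈ _
        rw [hb]
        refine Submodule.sum_mem _ fun m hm => Submodule.smul_mem _ _ ?_
        exact Submodule.subset_span
          ⟨⟨m, by have := Finset.mem_range.mp hm; have := j.isLt; omega⟩, rfl⟩
      have hmem2 : shiftOp (0 : Fin (n + 1)) (Γ (i + 1)) ∈
          Submodule.span ℂ (Set.range fun j : Fin (i + 1) => L (j : ℕ)) :=
        hspanΓL (hΦΓ i hiK)
      obtain ⟨bf, hbf⟩ := (Submodule.mem_span_range_iff_exists_fun ℂ).mp hmem2
      set b : ℕ → ℂ := fun j => if h : j < i + 1 then bf ⟨j, h⟩ else 0 with hbdef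
      have hE2' : shiftOp (0 : Fin (n + 1)) (Γ (i + 1)) =
          ∑ j ∈ Finset.range (i + 1), b j • L j := by
        rw [← hbf, ← Fin.sum_univ_eq_sum_range (fun j => b j • L j) (i + 1)]
        exact Finset.sum_congr rfl fun j _ => by simp [hbdef, j.isLt, Nat.not_lt.mpr (Nat.lt_succ_iff.mp j.isLt)]
      have hE2 : shiftOp (0 : Fin (n + 1)) (Γ (i + 1)) =
          ∑ j ∈ Finset.range K, b j • L j := by
        rw [hE2']
        refine Finset.sum_subset (Finset.range_subset_range.mpr (by omega)) fun j _ hj => ?_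
        have hj' : ¬ j < i + 1 := fun h => hj (Finset.mem_range.mpr h)
        rw [hbdef]
        simp only [dif_neg hj', zero_smul]
      -- linear independence forces vanishing of high coefficients
      set gN : ℕ → ℂ := fun j => if j < K then c (j + 1) - b j else 0 with hgN
      have hgsum : ∑ j : Fin (K + 1), gN (j : ℕ) • L (j : ℕ) = 0 := by
        rw [Fin.sum_univ_eq_sum_range (fun j => gN j • L j) (K + 1)]
        rw [Finset.sum_range_succ]
        have htop : gN K • L K = 0 := by simp [hgN]
        rw [htop, add_zero]
        have hcongr : ∀ j ∈ Finset.range K,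
            gN j • L j = c (j + 1) • L j - b j • L j := by
          intro j hj
          rw [hgN]
          simp only [if_pos (Finset.mem_range.mp hj), sub_smul]
        rw [Finset.sum_congr rfl hcongr, Finset.sum_sub_distrib, ← hE1, ← hE2, sub_self]
      have hgzero := Fintype.linearIndependent_iff.mp hLindep (fun j => gN (j : ℕ)) hgsum
      have hczero : ∀ m, i + 2 ≤ m → m ≤ K → c m = 0 := by
        intro m hm1 hm2
        have h0 := hgzero ⟨m - 1, by omega⟩
        simp only [hgN] at h0
        rw [if_pos (by omega : m - 1 < K)] at h0
        rw [show m - 1 + 1 = m by omega] at h0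
        have hb0 : b (m - 1) = 0 := by
          rw [hbdef]
          exact dif_neg (by omega)
        rw [hb0, sub_zero] at h0
        exact h0
      refine ⟨c, ?_⟩
      rw [hΓexp]
      refine (Finset.sum_subset (Finset.range_subset_range.mpr (by omega)) fun j hj1 hj2 => ?_).symm
      have h1 : j < K + 1 := Finset.mem_range.mp hj1
      have h2 : ¬ j < i + 2 := fun h => hj2 (Finset.mem_range.mpr h)
      rw [hczero j (by omega) (by omega), zero_smul]
  -- conclude
  intro i hi
  obtain ⟨c, hc⟩ := H i hi
  have hci : c i = a⁻¹ ^ i := by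
    have h := congrArg (fun f : (Fin (n + 1) →₀ ℕ) →₀ ℂ =>
      f (Finsupp.single (0 : Fin (n + 1)) i)) hc
    simp only [Finsupp.finset_sum_apply, Finsupp.smul_apply, smul_eq_mul] at h
    rw [hΓpure i hi, Finset.sum_range_succ, hLpure i hi, mul_one] at h
    rw [Finset.sum_eq_zero (fun j hj => by
      rw [key j (by have := Finset.mem_range.mp hj; omega) i (Finset.mem_range.mp hj),
        mul_zero]), zero_add] at h
    exact h.symm
  refine ⟨c, ?_⟩
  rw [hc, Finset.sum_range_succ, hci]
  exact add_comm _ _
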